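/- For any nonnegative integer N, positive integer l, and k = 0 (Euler case): ∑_{m,n≥0} x^{m+n} q^{(m+n)l + m(m+1)/2} [N − l choose m]_q [N − l + ⌊n/2⌋ choose ⌊n/2⌋]_{q^2} = 1/∏_{j=0}^{N−l}(1 − x q^{l+j}), assuming N ≥ l. -/

import Mathlib

open Finset

/-- Finite q-Pochhammer symbol `(a; q)_n = ∏_{j=0}^{n-1} (1 - a q^j)`. -/
noncomputable def qPoch (a q : ℂ) (n : ℕ) : ℂ := ∏ j ∈ Finset.range n, (1 - a * q ^ j)

/-- Infinite q-Pochhammer symbol `(a; q)_∞`. -/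
noncomputable def qPochInf (a q : ℂ) : ℂ := ∏' j : ℕ, (1 - a * q ^ j)

/-- Gaussian binomial coefficient `[a choose b]_q`, equal to
`(q;q)_a / ((q;q)_b (q;q)_{a-b})` when `a ≥ b ≥ 0`, and `0` otherwise. -/
noncomputable def qbinom (q : ℂ) (a b : ℤ) : ℂ :=
  if 0 ≤ b ∧ b ≤ a then
    qPoch q q a.toNat / (qPoch q q b.toNat * qPoch q q (a - b).toNat)
  else 0

noncomputable def qb (Q : ℂ) (n k : ℕ) : ℂ :=
  if k ≤ n then qPoch Q Q n / (qPoch Q Q k * qPoch Q Q (n - k)) else 0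

lemma qPoch_succ (Q : ℂ) (n : ℕ) : qPoch Q Q (n+1) = qPoch Q Q n * (1 - Q ^ (n+1)) := by
  rw [qPoch, Finset.prod_range_succ, ← qPoch, pow_succ']

lemma qPoch_zero (Q : ℂ) : qPoch Q Q 0 = 1 := by simp [qPoch]

lemma one_sub_pow_ne_zero {Q : ℂ} (hQ : ‖Q‖ < 1) (n : ℕ) : (1 : ℂ) - Q ^ (n+1) ≠ 0 := by
  intro h
  have h2 : Q ^ (n+1) = 1 := by linear_combination -h
  have : ‖Q ^ (n+1)‖ < 1 := by
    rw [norm_pow]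
    calc ‖Q‖ ^ (n+1) ≤ ‖Q‖ ^ 1 := by
          apply pow_le_pow_of_le_one (norm_nonneg _) hQ.le; omega
      _ < 1 := by simpa using hQ
  rw [h2] at this; simp at this

lemma qPoch_ne_zero {Q : ℂ} (hQ : ‖Q‖ < 1) (n : ℕ) : qPoch Q Q n ≠ 0 := by
  induction n with
  | zero => simp [qPoch_zero]
  | succ m ih => rw [qPoch_succ]; exact mul_ne_zero ih (one_sub_pow_ne_zero hQ m)

lemma qb_zero {Q : ℂ} (hQ : ‖Q‖ < 1) (n : ℕ) : qb Q n 0 = 1 := by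
  simp [qb, qPoch_zero, div_self (qPoch_ne_zero hQ n)]

lemma qb_diag (Q : ℂ) {n k : ℕ} (hQ : ‖Q‖ < 1) (h : n = k) : qb Q n k = 1 := by
  subst h
  simp [qb, qPoch_zero, div_self (qPoch_ne_zero hQ n)]

lemma qb_of_gt (Q : ℂ) {n k : ℕ} (h : n < k) : qb Q n k = 0 := by
  simp [qb, Nat.not_le.mpr h]

/-- Pascal identity. -/
lemma qb_pascal {Q : ℂ} (hQ : ‖Q‖ < 1) (n k : ℕ) :
    qb Q (n+1) (k+1) = qb Q n (k+1) + Q ^ (n-k) * qb Q n k := by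
  rcases lt_trichotomy n k with h | rfl | h
  · rw [qb_of_gt Q (by omega), qb_of_gt Q (by omega), qb_of_gt Q h]; ring
  · rw [qb_diag Q hQ rfl, qb_diag Q hQ rfl, qb_of_gt Q (by omega)]; simp
  · obtain ⟨d, rfl⟩ : ∃ d, n = k + 1 + d := ⟨n - k - 1, by omega⟩
    have e1 : k + 1 + d + 1 - (k + 1) = d + 1 := by omega
    have e2 : k + 1 + d - (k + 1) = d := by omega
    have e3 : k + 1 + d - k = d + 1 := by omega
    rw [qb, qb, qb, if_pos (by omega), if_pos (by omega), if_pos (by omega), e1, e2, e3]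
    rw [show k + 1 + d + 1 = (k + 1 + d) + 1 from rfl, qPoch_succ Q (k+1+d),
        qPoch_succ Q k, qPoch_succ Q d]
    have hk := qPoch_ne_zero hQ k
    have hd := qPoch_ne_zero hQ d
    have hn := qPoch_ne_zero hQ (k+1+d)
    have h1 := one_sub_pow_ne_zero hQ k
    have h2 := one_sub_pow_ne_zero hQ d
    field_simp
    rw [show k + 1 + d + 1 = (d+1) + (k+1) by omega, pow_add]
    ring

lemma tri_succ (m : ℕ) : (m+1)*(m+2)/2 = m*(m+1)/2 + (m+1) := by
  have : (m+1)*(m+2) = m*(m+1) + 2*(m+1) := by ring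
  rw [this, Nat.add_mul_div_left _ _ (by norm_num : 0 < 2)]

/-- Finite q-binomial theorem. -/
lemma qbinom_thm {Q : ℂ} (hQ : ‖Q‖ < 1) (z : ℂ) (M : ℕ) :
    ∑ m ∈ range (M+1), Q ^ (m*(m+1)/2) * qb Q M m * z ^ m
      = ∏ j ∈ range M, (1 + z * Q ^ (j+1)) := by
  induction M with
  | zero => simp [qb_zero hQ]
  | succ M ih =>
    rw [Finset.sum_range_succ' (fun m => Q ^ (m*(m+1)/2) * qb Q (M+1) m * z ^ m) (M+1)]
    have pas : ∀ m ∈ range (M+1),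
        Q ^ ((m+1)*(m+2)/2) * qb Q (M+1) (m+1) * z ^ (m+1)
          = Q ^ ((m+1)*(m+2)/2) * qb Q M (m+1) * z ^ (m+1)
            + (z * Q ^ (M+1)) * (Q ^ (m*(m+1)/2) * qb Q M m * z ^ m) := by
      intro m hm
      rw [qb_pascal hQ M m]
      have hmM : m ≤ M := by simpa using Nat.lt_succ_iff.mp (Finset.mem_range.mp hm)
      have hexp : (m+1)*(m+2)/2 + (M - m) = m*(m+1)/2 + (M + 1) := by
        rw [tri_succ]; omega
      have : Q ^ ((m+1)*(m+2)/2) * Q ^ (M-m) = Q ^ (m*(m+1)/2) * Q ^ (M+1) := by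
        rw [← pow_add, ← pow_add, hexp]
      linear_combination (qb Q M m * z ^ (m+1)) * this
    rw [Finset.sum_congr rfl pas, Finset.sum_add_distrib, ← Finset.mul_sum, ih]
    have reassemble : ∑ m ∈ range (M+1), Q ^ ((m+1)*(m+2)/2) * qb Q M (m+1) * z ^ (m+1)
        + Q ^ (0*(0+1)/2) * qb Q (M+1) 0 * z ^ 0
        = ∏ j ∈ range M, (1 + z * Q ^ (j+1)) := by
      rw [qb_zero hQ]
      have : Q ^ (0*(0+1)/2) * (1:ℂ) * z ^ 0 = Q ^ (0*(0+1)/2) * qb Q M 0 * z ^ 0 := by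
        rw [qb_zero hQ]
      rw [this, ← Finset.sum_range_succ' (fun m => Q ^ (m*(m+1)/2) * qb Q M m * z ^ m) (M+1)]
      rw [Finset.sum_range_succ]
      rw [qb_of_gt Q (by omega : M < M + 1)]
      simpa using ih
    rw [add_right_comm, reassemble, Finset.prod_range_succ]
    ring

lemma qb_shift_eq {Q : ℂ} (hQ : ‖Q‖ < 1) (M k : ℕ) :
    qb Q (M + k) k = (∏ j ∈ range M, (1 - Q ^ (k + j + 1))) / qPoch Q Q M := by
  have h1 : qPoch Q Q (k + M) = qPoch Q Q k * ∏ j ∈ range M, (1 - Q ^ (k + j + 1)) := by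
    rw [qPoch, Finset.prod_range_add, ← qPoch]
    exact congrArg _ (Finset.prod_congr rfl fun j _ => by rw [← pow_succ'])
  rw [qb, if_pos (by omega), show M + k - k = M from by omega, show M + k = k + M from by omega,
      h1, mul_div_mul_left _ _ (qPoch_ne_zero hQ k)]

lemma qb_shift_bound {Q : ℂ} (hQ : ‖Q‖ < 1) (M k : ℕ) :
    ‖qb Q (M + k) k‖ ≤ 2 ^ M / ‖qPoch Q Q M‖ := by
  rw [qb_shift_eq hQ M k, norm_div]
  have hM : (0:ℝ) < ‖qPoch Q Q M‖ := norm_pos_iff.mpr (qPoch_ne_zero hQ M)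
  have hnum : ‖∏ j ∈ range M, (1 - Q ^ (k+j+1))‖ ≤ 2 ^ M := by
    calc ‖∏ j ∈ range M, (1 - Q ^ (k+j+1))‖ ≤ ∏ j ∈ range M, ‖(1:ℂ) - Q ^ (k+j+1)‖ :=
          norm_prod_le _ _
      _ ≤ ∏ _j ∈ range M, 2 := by
          apply Finset.prod_le_prod (fun j _ => norm_nonneg _) (fun j _ => ?_)
          calc ‖(1:ℂ) - Q ^ (k+j+1)‖ ≤ ‖(1:ℂ)‖ + ‖Q ^ (k+j+1)‖ := norm_sub_le _ _
            _ ≤ 1 + 1 := by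
                rw [norm_one, norm_pow]
                exact add_le_add_right (pow_le_one₀ (norm_nonneg Q) hQ.le) 1
            _ = 2 := by norm_num
      _ = 2 ^ M := by simp
  exact (div_le_div_iff_of_pos_right hM).mpr hnum

lemma summable_qb_shift {Q z : ℂ} (hQ : ‖Q‖ < 1) (hz : ‖z‖ < 1) (M : ℕ) :
    Summable (fun k => ‖qb Q (M + k) k * z ^ k‖) := by
  have hg : Summable (fun k : ℕ => (2 ^ M / ‖qPoch Q Q M‖) * ‖z‖ ^ k) :=
    (summable_geometric_of_lt_one (norm_nonneg z) hz).mul_left _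
  refine Summable.of_nonneg_of_le (fun k => norm_nonneg _) (fun k => ?_) hg
  rw [norm_mul, norm_pow]
  exact mul_le_mul_of_nonneg_right (qb_shift_bound hQ M k) (by positivity)

/-- Infinite q-binomial theorem (Lemma B). -/
lemma qbinom_inf_thm {Q z : ℂ} (hQ : ‖Q‖ < 1) (hz : ‖z‖ < 1) (M : ℕ) :
    ∑' k : ℕ, qb Q (M + k) k * z ^ k = (∏ j ∈ range (M+1), (1 - z * Q ^ j))⁻¹ := by
  induction M with
  | zero =>
    have : ∀ k : ℕ, qb Q (0 + k) k * z ^ k = z ^ k := by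
      intro k; rw [zero_add, qb_diag Q hQ rfl, one_mul]
    rw [tsum_congr this, tsum_geometric_of_norm_lt_one hz]
    simp
  | succ M ih =>
    set f := fun k => qb Q (M + 1 + k) k * z ^ k with hf
    have hsum : Summable f := (summable_qb_shift hQ hz (M+1)).of_norm
    have hsumM : Summable (fun k => qb Q (M + k) k * z ^ k) :=
      (summable_qb_shift hQ hz M).of_norm
    have key : ∑' k, f k = (∏ j ∈ range (M+1), (1 - z * Q ^ j))⁻¹
        + z * Q ^ (M+1) * ∑' k, f k := by
      conv_lhs => rw [Summable.tsum_eq_zero_add hsum]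
      have step : ∀ k : ℕ, f (k + 1)
          = qb Q (M + (k+1)) (k+1) * z ^ (k+1) + (z * Q ^ (M+1)) * f k := by
        intro k
        show qb Q (M + 1 + (k+1)) (k+1) * z ^ (k+1) = _
        have : M + 1 + (k + 1) = (M + 1 + k) + 1 := by omega
        rw [this, qb_pascal hQ (M+1+k) k, show M + 1 + k - k = M + 1 from by omega,
            show M + 1 + k = M + (k+1) from by omega]
        simp only [hf]
        rw [show M + 1 + k = M + (k+1) from by omega]
        ring
      have e1 : ∑' k, f (k+1)
          = ∑' k, (qb Q (M + (k+1)) (k+1) * z ^ (k+1) + (z * Q ^ (M+1)) * f k) :=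
        tsum_congr step
      rw [e1, Summable.tsum_add ((summable_nat_add_iff 1).mpr hsumM) (hsum.mul_left _), tsum_mul_left]
      have hf0 : f 0 = 1 := by simp [hf, qb_zero hQ]
      have h2 : (1:ℂ) + ∑' k, qb Q (M + (k+1)) (k+1) * z ^ (k+1)
          = ∑' k, qb Q (M + k) k * z ^ k := by
        rw [Summable.tsum_eq_zero_add hsumM]
        simp [qb_zero hQ]
      rw [← ih]
      linear_combination hf0 + h2
    have hne : (1 : ℂ) - z * Q ^ (M+1) ≠ 0 := by
      intro h
      have h2 : z * Q ^ (M+1) = 1 := by linear_combination -h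
      have : ‖z * Q ^ (M+1)‖ < 1 := by
        rw [norm_mul, norm_pow]
        calc ‖z‖ * ‖Q‖ ^ (M+1) ≤ ‖z‖ * 1 := by
              apply mul_le_mul_of_nonneg_left ?_ (norm_nonneg z)
              exact pow_le_one₀ (norm_nonneg Q) hQ.le
          _ < 1 := by simpa using hz
      rw [h2] at this; simp at this
    have heq : (∑' k, f k) * (1 - z * Q ^ (M+1)) = (∏ j ∈ range (M+1), (1 - z * Q ^ j))⁻¹ := by
      linear_combination key
    rw [Finset.prod_range_succ, mul_inv, ← heq, mul_assoc, mul_inv_cancel₀ hne, mul_one]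

lemma qbinom_natCast (Q : ℂ) (n k : ℕ) : qbinom Q (n:ℤ) (k:ℤ) = qb Q n k := by
  rw [qbinom, qb]
  by_cases h : k ≤ n
  · rw [if_pos (by omega), if_pos h]
    have e1 : ((n:ℤ)).toNat = n := by omega
    have e2 : ((k:ℤ)).toNat = k := by omega
    have e3 : ((n:ℤ) - (k:ℤ)).toNat = n - k := by omega
    rw [e1, e2, e3]
  · rw [if_neg (by omega), if_neg h]

lemma one_sub_ne {c : ℂ} (hc : ‖c‖ < 1) : (1:ℂ) - c ≠ 0 := by
  intro h
  have : c = 1 := by linear_combination -h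
  rw [this] at hc; simp at hc

lemma one_add_ne {c : ℂ} (hc : ‖c‖ < 1) : (1:ℂ) + c ≠ 0 := by
  intro h
  have : c = -1 := by linear_combination h
  rw [this] at hc; simp at hc

/-- the `k = 0` (Euler) case of the bounded double-sum identity:
the double sum equals `1/(xq^l;q)_{N-l+1}`. -/
theorem stmt19 (N l : ℕ) (hl : 0 < l) (hN : l ≤ N) (q x : ℂ) (hq : ‖q‖ < 1)
    (hx : ‖x‖ < 1) :
    ∑' p : ℕ × ℕ, x ^ (p.1 + p.2) * q ^ ((p.1 + p.2) * l + p.1 * (p.1 + 1) / 2)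
        * qbinom q ((N : ℤ) - l) p.1
        * qbinom (q ^ 2) ((N : ℤ) - l + (p.2 / 2 : ℕ)) ((p.2 / 2 : ℕ) : ℤ)
      = 1 / ∏ j ∈ Finset.range (N - l + 1), (1 - x * q ^ (l + j)) := by
  set M := N - l with hM
  have hq2 : ‖q ^ 2‖ < 1 := by
    rw [norm_pow]
    exact pow_lt_one₀ (norm_nonneg q) hq (by norm_num)
  set w : ℂ := x ^ 2 * q ^ (2 * l) with hw
  have hwlt : ‖w‖ < 1 := by
    rw [hw, norm_mul, norm_pow, norm_pow]
    have h1 : ‖x‖ ^ 2 < 1 := pow_lt_one₀ (norm_nonneg x) hx (by norm_num)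
    have h2 : ‖q‖ ^ (2*l) ≤ 1 := pow_le_one₀ (norm_nonneg q) hq.le
    calc ‖x‖ ^ 2 * ‖q‖ ^ (2*l) ≤ ‖x‖ ^ 2 := by
          simpa using mul_le_mul_of_nonneg_left h2 (by positivity : (0:ℝ) ≤ ‖x‖ ^ 2)
      _ < 1 := h1
  set F : ℕ → ℂ := fun m => x ^ m * q ^ (m * l + m * (m + 1) / 2) * qb q M m with hF
  set G : ℕ → ℂ := fun n => x ^ n * q ^ (n * l) * qb (q ^ 2) (M + n / 2) (n / 2) with hG
  have hcast1 : (N : ℤ) - l = (M : ℤ) := by omega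
  have hpt : ∀ p : ℕ × ℕ, x ^ (p.1 + p.2) * q ^ ((p.1 + p.2) * l + p.1 * (p.1 + 1) / 2)
      * qbinom q ((N : ℤ) - l) p.1
      * qbinom (q ^ 2) ((N : ℤ) - l + (p.2 / 2 : ℕ)) ((p.2 / 2 : ℕ) : ℤ)
      = F p.1 * G p.2 := by
    rintro ⟨m, n⟩
    simp only
    have c1 : qbinom q ((N : ℤ) - l) m = qb q M m := by rw [hcast1, qbinom_natCast]
    have c2 : qbinom (q ^ 2) ((N : ℤ) - l + (n / 2 : ℕ)) ((n / 2 : ℕ) : ℤ)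
        = qb (q ^ 2) (M + n / 2) (n / 2) := by
      rw [show (N : ℤ) - l + ((n / 2 : ℕ) : ℤ) = ((M + n / 2 : ℕ) : ℤ) by push_cast; omega,
          qbinom_natCast]
    rw [c1, c2, hF, hG]
    simp only
    rw [pow_add, show (m + n) * l + m * (m + 1) / 2 = (m * l + m * (m+1)/2) + n * l by
      rw [add_mul]; exact Nat.add_right_comm _ _ _]
    rw [pow_add]
    ring
  have hFsum : Summable fun m => ‖F m‖ := by
    apply summable_of_ne_finset_zero (s := Finset.range (M+1))
    intro m hm
    have hMm : M < m := by simpa using hm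
    rw [hF]
    simp only
    rw [qb_of_gt q hMm, mul_zero, norm_zero]
  have hGsum : Summable fun n => ‖G n‖ := by
    have hgeo : Summable (fun n : ℕ => (2 ^ M / ‖qPoch (q^2) (q^2) M‖) * ‖x‖ ^ n) :=
      (summable_geometric_of_lt_one (norm_nonneg x) hx).mul_left _
    refine Summable.of_nonneg_of_le (fun n => norm_nonneg _) (fun n => ?_) hgeo
    rw [hG]
    simp only [norm_mul, norm_pow]
    calc ‖x‖^n * ‖q‖^(n*l) * ‖qb (q^2) (M + n/2) (n/2)‖
        ≤ ‖x‖^n * 1 * (2 ^ M / ‖qPoch (q^2) (q^2) M‖) := by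
          apply mul_le_mul ?_ (qb_shift_bound hq2 M (n/2)) (norm_nonneg _) (by positivity)
          exact mul_le_mul_of_nonneg_left (pow_le_one₀ (norm_nonneg q) hq.le) (by positivity)
      _ = (2 ^ M / ‖qPoch (q^2) (q^2) M‖) * ‖x‖ ^ n := by ring
  rw [tsum_congr hpt, ← tsum_mul_tsum_of_summable_norm hFsum hGsum]
  have hFval : ∑' m, F m = ∏ j ∈ Finset.range M, (1 + (x * q ^ l) * q ^ (j+1)) := by
    rw [tsum_eq_sum (s := Finset.range (M+1)) (fun m hm => by
      have hMm : M < m := by simpa using hm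
      rw [hF]; simp only; rw [qb_of_gt q hMm, mul_zero])]
    rw [← qbinom_thm hq (x * q^l) M]
    refine Finset.sum_congr rfl fun m _ => ?_
    rw [hF]
    simp only
    rw [mul_pow, ← pow_mul, pow_add, Nat.mul_comm l m]
    ring
  have hHsum : Summable fun r => qb (q^2) (M + r) r * w ^ r :=
    (summable_qb_shift hq2 hwlt M).of_norm
  have hGeven : ∀ r : ℕ, G (2 * r) = qb (q^2) (M + r) r * w ^ r := by
    intro r
    rw [hG]
    simp only
    rw [show 2 * r / 2 = r by omega, show (2*r)*l = 2*l*r by ring, hw, mul_pow,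
        ← pow_mul, ← pow_mul]
    ring
  have hGodd : ∀ r : ℕ, G (2 * r + 1) = (x * q ^ l) * (qb (q^2) (M + r) r * w ^ r) := by
    intro r
    rw [hG]
    simp only
    rw [show (2*r+1) / 2 = r by omega, show (2*r+1)*l = 2*l*r + l by ring, hw, mul_pow,
        ← pow_mul, pow_add, pow_succ]
    ring
  have hGval : ∑' n, G n
      = (1 + x * q ^ l) * (∏ j ∈ Finset.range (M+1), (1 - w * (q^2)^j))⁻¹ := by
    have hs1 : Summable fun r => G (2*r) := hHsum.congr (fun r => (hGeven r).symm)
    have hs2 : Summable fun r => G (2*r+1) :=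
      (hHsum.mul_left (x*q^l)).congr (fun r => (hGodd r).symm)
    rw [← tsum_even_add_odd hs1 hs2, tsum_congr hGeven, tsum_congr hGodd, tsum_mul_left,
        qbinom_inf_thm hq2 hwlt M]
    ring
  rw [hFval, hGval]
  have hxq : ∀ j : ℕ, ‖x * q ^ (l + j)‖ < 1 := by
    intro j
    rw [norm_mul, norm_pow]
    calc ‖x‖ * ‖q‖^(l+j) ≤ ‖x‖ * 1 :=
          mul_le_mul_of_nonneg_left (pow_le_one₀ (norm_nonneg q) hq.le) (norm_nonneg x)
      _ < 1 := by simpa using hx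
  have hA : ∏ j ∈ Finset.range (M+1), (1 + x * q ^ (l + j))
      = (1 + x * q ^ l) * ∏ j ∈ Finset.range M, (1 + (x * q ^ l) * q ^ (j+1)) := by
    rw [Finset.prod_range_succ' (fun j => 1 + x * q ^ (l + j)) M, mul_comm]
    congr 1
    refine Finset.prod_congr rfl fun j _ => ?_
    rw [pow_add]
    ring
  have hW : ∏ j ∈ Finset.range (M+1), (1 - w * (q^2)^j)
      = (∏ j ∈ Finset.range (M+1), (1 - x * q ^ (l+j)))
        * ∏ j ∈ Finset.range (M+1), (1 + x * q ^ (l+j)) := by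
    rw [← Finset.prod_mul_distrib]
    refine Finset.prod_congr rfl fun j _ => ?_
    have hfac : w * (q^2)^j = (x * q^(l+j)) * (x * q^(l+j)) := by
      rw [hw, ← pow_mul]
      ring
    linear_combination -hfac
  have hAne : (∏ j ∈ Finset.range (M+1), (1 + x * q ^ (l+j))) ≠ 0 :=
    Finset.prod_ne_zero_iff.mpr (fun j _ => one_add_ne (hxq j))
  have hEne : (∏ j ∈ Finset.range (M+1), (1 - x * q ^ (l+j))) ≠ 0 :=
    Finset.prod_ne_zero_iff.mpr (fun j _ => one_sub_ne (hxq j))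
  rw [hW, mul_inv, one_div]
  calc (∏ j ∈ Finset.range M, (1 + x * q ^ l * q ^ (j+1))) *
      ((1 + x * q ^ l) * ((∏ j ∈ Finset.range (M+1), (1 - x * q ^ (l+j)))⁻¹ *
        (∏ j ∈ Finset.range (M+1), (1 + x * q ^ (l+j)))⁻¹))
      = ((1 + x * q ^ l) * ∏ j ∈ Finset.range M, (1 + x * q ^ l * q ^ (j+1)))
        * (∏ j ∈ Finset.range (M+1), (1 + x * q ^ (l+j)))⁻¹
        * (∏ j ∈ Finset.range (M+1), (1 - x * q ^ (l+j)))⁻¹ := by ring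
    _ = (∏ j ∈ Finset.range (M+1), (1 + x * q ^ (l+j)))
        * (∏ j ∈ Finset.range (M+1), (1 + x * q ^ (l+j)))⁻¹
        * (∏ j ∈ Finset.range (M+1), (1 - x * q ^ (l+j)))⁻¹ := by rw [← hA]
    _ = (∏ j ∈ Finset.range (M+1), (1 - x * q ^ (l+j)))⁻¹ := by
        rw [mul_inv_cancel₀ hAne, one_mul]
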